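/- Let k ≥ 3 and let G be a finite simple graph containing distinct vertices v₁,…,v_{k+1} such that (v_i, v_j) ∈ E(G) for every i ∈ [k−1] and every j ∈ {k, k+1}. Then G admits a k-dimensional orthogonal representation if and only if at least one of the following graphs does: (1) provided v_k and v_{k+1} are non-adjacent in G, the graph obtained from G by identifying v_k and v_{k+1}; (2) for each pair of distinct non-adjacent vertices u, w ∈ {v₁,…,v_{k−1}}, the graph obtained from G by identifying u and w; (3) for each subset S ⊆ {v₁,…,v_{k−1}} with |S| ≥ 3 such that no vertex of S is adjacent to all the other vertices of S, the graph obtained from G by performing set identification with respect to S. -/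

import Mathlib

open scoped ComplexConjugate

/-- The standard (conjugate-linear in the first argument) inner product on `ι → ℂ`. -/
noncomputable def cdot {ι : Type} [Fintype ι] (x y : ι → ℂ) : ℂ :=
  ∑ i, conj (x i) * y i

/-- A `k`-dimensional (complex) orthogonal representation of a graph. -/
def IsOrthRep {V : Type} (G : SimpleGraph V) (k : ℕ) (ψ : V → Fin k → ℂ) : Prop :=
  (∀ v, cdot (ψ v) (ψ v) = 1) ∧ ∀ u v, G.Adj u v → cdot (ψ u) (ψ v) = 0

/-- The orthogonal rank `ξ(G)`: the least `k ≥ 1` admitting a `k`-dimensional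
orthogonal representation. -/
noncomputable def orthRank {V : Type} (G : SimpleGraph V) : ℕ :=
  sInf {k | 1 ≤ k ∧ ∃ ψ : V → Fin k → ℂ, IsOrthRep G k ψ}

/-- A quantum `k`-colouring of `G` on `ℂ^d`: projective measurements
`{E v c}_{c ∈ Fin k}` such that `E u c * E v c = 0` for adjacent `u, v`. -/
def IsQuantumColoring {V : Type} (G : SimpleGraph V) (k d : ℕ)
    (E : V → Fin k → Matrix (Fin d) (Fin d) ℂ) : Prop :=
  (∀ v c, (E v c).IsHermitian) ∧
  (∀ v c, E v c * E v c = E v c) ∧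
  (∀ v, ∑ c, E v c = 1) ∧
  ∀ u v, G.Adj u v → ∀ c, E u c * E v c = 0

/-- The quantum chromatic number `χ_q(G)`: the least `k ≥ 1` for which a quantum
`k`-colouring exists on `ℂ^d` for some `d ≥ 1`. -/
noncomputable def quantumChromaticNumber {V : Type} (G : SimpleGraph V) : ℕ :=
  sInf {k | 1 ≤ k ∧ ∃ d, 1 ≤ d ∧
    ∃ E : V → Fin k → Matrix (Fin d) (Fin d) ℂ, IsQuantumColoring G k d E}

/-- A rank-`r` quantum `k`-colouring: a quantum `k`-colouring on `ℂ^(r*k)` in which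
every projector has rank exactly `r`. -/
def IsRankRQuantumColoring {V : Type} (G : SimpleGraph V) (r k : ℕ)
    (E : V → Fin k → Matrix (Fin (r * k)) (Fin (r * k)) ℂ) : Prop :=
  IsQuantumColoring G k (r * k) E ∧ ∀ v c, (E v c).rank = r

/-- The rank-`r` quantum chromatic number `χ_q^{(r)}(G)`. -/
noncomputable def rankChromaticNumber {V : Type} (G : SimpleGraph V) (r : ℕ) : ℕ :=
  sInf {k | 1 ≤ k ∧ ∃ E : V → Fin k → Matrix (Fin (r * k)) (Fin (r * k)) ℂ,
    IsRankRQuantumColoring G r k E}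

/-- The chromatic number of `G` as a natural number: the least `k ≥ 1` for which a
proper `k`-colouring exists. -/
noncomputable def chromNat {V : Type} (G : SimpleGraph V) : ℕ :=
  sInf {k | 1 ≤ k ∧ G.Colorable k}

/-- The clique number `ω(G)`. -/
noncomputable def cliqueNum' {V : Type} (G : SimpleGraph V) : ℕ :=
  sSup {n | ∃ S : Finset V, G.IsNClique n S}

/-- Identifying vertex `u` with vertex `v`: delete `u`, and add an edge `(v, w)` for
every `w ∉ {u, v}` that was adjacent to `u` in `G`. -/
def identify {V : Type} (G : SimpleGraph V) (u v : V) :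
    SimpleGraph {w : V // w ≠ u} :=
  SimpleGraph.fromRel fun a b =>
    G.Adj ↑a ↑b ∨ ((a : V) = v ∧ G.Adj u ↑b) ∨ ((b : V) = v ∧ G.Adj u ↑a)

/-- Set identification of `G` with respect to `S`: for `u ∈ S` and `v ∉ S`, the edge
`(u, v)` is added whenever `v` is adjacent in `G` to every `w ∈ S \ {u}`. -/
def setIdentify {V : Type} (G : SimpleGraph V) (S : Set V) : SimpleGraph V :=
  SimpleGraph.fromRel fun a b =>
    G.Adj a b ∨ (a ∈ S ∧ b ∉ S ∧ ∀ w ∈ S, w ≠ a → G.Adj b w)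


/-- Identity reinterpretation of `Fin k → ℂ` as `EuclideanSpace ℂ (Fin k)`. -/
noncomputable def toE {k : ℕ} (x : Fin k → ℂ) : EuclideanSpace ℂ (Fin k) := WithLp.toLp 2 x

lemma cdot_eq_inner {k : ℕ} (x y : Fin k → ℂ) :
    cdot x y = @inner ℂ (EuclideanSpace ℂ (Fin k)) _ (toE x) (toE y) := by
  simp [toE, cdot, PiLp.inner_apply, RCLike.inner_apply]
  exact Finset.sum_congr rfl fun i _ => mul_comm _ _

lemma cdot_conj {k : ℕ} (x y : Fin k → ℂ) : cdot y x = conj (cdot x y) := by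
  simp only [cdot, map_sum, map_mul, Complex.conj_conj]
  exact Finset.sum_congr rfl fun i _ => mul_comm _ _

lemma cdot_smul_left {k : ℕ} (c : ℂ) (x y : Fin k → ℂ) :
    cdot (c • x) y = conj c * cdot x y := by
  simp only [cdot, Pi.smul_apply, smul_eq_mul, map_mul, Finset.mul_sum, mul_assoc]

lemma cdot_smul_right {k : ℕ} (c : ℂ) (x y : Fin k → ℂ) :
    cdot x (c • y) = c * cdot x y := by
  simp only [cdot, Pi.smul_apply, smul_eq_mul, Finset.mul_sum]
  exact Finset.sum_congr rfl fun i _ => by ring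

lemma inner_span_right' {E : Type*} [NormedAddCommGroup E] [InnerProductSpace ℂ E]
    (x : E) (s : Set E) (h : ∀ y ∈ s, inner ℂ x y = 0) :
    ∀ y ∈ Submodule.span ℂ s, inner ℂ x y = 0 := by
  intro y hy
  induction hy using Submodule.span_induction with
  | mem z hz => exact h z hz
  | zero => exact inner_zero_right x
  | add a b _ _ ha hb => rw [inner_add_right, ha, hb, add_zero]
  | smul c a _ ha => rw [inner_smul_right, ha, mul_zero]

lemma inner_span_left' {E : Type*} [NormedAddCommGroup E] [InnerProductSpace ℂ E]
    (x : E) (s : Set E) (h : ∀ y ∈ s, inner ℂ y x = 0) :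
    ∀ y ∈ Submodule.span ℂ s, inner ℂ y x = 0 := by
  intro y hy
  induction hy using Submodule.span_induction with
  | mem z hz => exact h z hz
  | zero => exact inner_zero_left x
  | add a b _ _ ha hb => rw [inner_add_left, ha, hb, add_zero]
  | smul c a _ ha => rw [inner_smul_left, ha, mul_zero]


lemma exists_circuit {M : Type*} [AddCommGroup M] [Module ℂ M]
    {ι : Type*} [Fintype ι] [DecidableEq ι] (f : ι → M)
    (h : ¬ LinearIndependent ℂ f) (hne : ∀ i, f i ≠ 0) :
    ∃ T : Finset ι, 2 ≤ T.card ∧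
      ∀ u ∈ T, f u ∈ Submodule.span ℂ (f '' (T.erase u : Finset ι)) := by
  obtain ⟨c, hsum, i₀, hi₀⟩ := Fintype.not_linearIndependent_iff.mp h
  refine ⟨Finset.univ.filter (fun i => c i ≠ 0), ?_, ?_⟩
  · by_contra hlt
    push_neg at hlt
    interval_cases hcard : (Finset.univ.filter (fun i => c i ≠ 0)).card
    · have : i₀ ∈ Finset.univ.filter (fun i => c i ≠ 0) := by simp [hi₀]
      simp_all [Finset.card_eq_zero]
    · obtain ⟨a, ha⟩ := Finset.card_eq_one.mp hcard
      have hia : i₀ = a := by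
        have : i₀ ∈ Finset.univ.filter (fun i => c i ≠ 0) := by simp [hi₀]
        simpa [ha] using this
      have hz : ∑ i, c i • f i = c a • f a := by
        rw [← Finset.sum_filter_of_ne (p := fun i => c i ≠ 0)]
        · rw [ha, Finset.sum_singleton]
        · intro i _ hci
          intro hc0; exact hci (by rw [hc0, zero_smul])
      rw [hz] at hsum
      rcases smul_eq_zero.mp hsum with h1 | h2
      · exact (hia ▸ hi₀) h1
      · exact hne a h2
  · intro u hu
    have hcu : c u ≠ 0 := by simpa using hu
    have hTsum : ∑ i ∈ Finset.univ.filter (fun i => c i ≠ 0), c i • f i = 0 := by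
      rw [Finset.sum_filter_of_ne]
      · exact hsum
      · intro i _ hci hc0; exact hci (by rw [hc0, zero_smul])
    rw [← Finset.add_sum_erase _ _ hu] at hTsum
    have hfu : f u = (-(c u)⁻¹) •
        ∑ i ∈ (Finset.univ.filter (fun i => c i ≠ 0)).erase u, c i • f i := by
      have : c u • f u = -∑ i ∈ (Finset.univ.filter (fun i => c i ≠ 0)).erase u, c i • f i := by
        linear_combination (norm := module) hTsum
      rw [neg_smul, ← smul_neg, ← this, smul_smul, inv_mul_cancel₀ hcu, one_smul]
    rw [hfu]
    refine Submodule.smul_mem _ _ (Submodule.sum_mem _ fun i hi => Submodule.smul_mem _ _ ?_)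
    exact Submodule.subset_span ⟨i, by simpa using (by simpa using hi : ¬i = u ∧ ¬c i = 0).symm, rfl⟩

/-- backward: a rep of `identify G u₀ w₀` yields a rep of `G`, provided `u₀ w₀` nonadjacent. -/
lemma isOrthRep_of_identify {V : Type} [DecidableEq V] (G : SimpleGraph V) (k : ℕ) (u₀ w₀ : V)
    (hne : w₀ ≠ u₀) (hnadj : ¬ G.Adj u₀ w₀)
    (ψ : {w : V // w ≠ u₀} → Fin k → ℂ) (h : IsOrthRep (identify G u₀ w₀) k ψ) :
    ∃ φ : V → Fin k → ℂ, IsOrthRep G k φ := by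
  refine ⟨fun w => if hw : w = u₀ then ψ ⟨w₀, hne⟩ else ψ ⟨w, hw⟩, ?_, ?_⟩
  · intro w
    by_cases hw : w = u₀
    · simp only [dif_pos hw]; exact h.1 _
    · simp only [dif_neg hw]; exact h.1 _
  · intro x y hxy
    have hxyne : x ≠ y := hxy.ne
    have key : ∀ (a b : {w : V // w ≠ u₀}), (G.Adj ↑a ↑b ∨ ((a : V) = w₀ ∧ G.Adj u₀ ↑b)
        ∨ ((b : V) = w₀ ∧ G.Adj u₀ ↑a)) → a ≠ b → cdot (ψ a) (ψ b) = 0 := by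
      intro a b hr hab
      exact h.2 a b (by rw [identify, SimpleGraph.fromRel_adj]; exact ⟨hab, Or.inl hr⟩)
    by_cases hx : x = u₀ <;> by_cases hy : y = u₀
    · exact absurd (hx.trans hy.symm) hxyne
    · simp only [dif_pos hx, dif_neg hy]
      refine key ⟨w₀, hne⟩ ⟨y, hy⟩ (Or.inr (Or.inl ⟨rfl, hx ▸ hxy⟩)) ?_
      intro hc
      have : w₀ = y := congrArg Subtype.val hc
      exact hnadj (this ▸ (hx ▸ hxy))
    · simp only [dif_neg hx, dif_pos hy]
      refine key ⟨x, hx⟩ ⟨w₀, hne⟩ (Or.inr (Or.inr ⟨rfl, (hy ▸ hxy).symm⟩)) ?_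
      intro hc
      have : x = w₀ := congrArg Subtype.val hc
      exact hnadj (G.adj_symm (this ▸ (hy ▸ hxy)))
    · simp only [dif_neg hx, dif_neg hy]
      exact key ⟨x, hx⟩ ⟨y, hy⟩ (Or.inl hxy) (fun hc => hxyne (congrArg Subtype.val hc))

/-- forward: if `ψ w₀` is a multiple of `ψ u₀` then `ψ` descends to `identify G u₀ w₀`. -/
lemma isOrthRep_identify_of_scaled {V : Type} (G : SimpleGraph V) (k : ℕ) (u₀ w₀ : V)
    (ψ : V → Fin k → ℂ) (h : IsOrthRep G k ψ) (c : ℂ) (hc : ψ w₀ = c • ψ u₀) :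
    IsOrthRep (identify G u₀ w₀) k (fun w => ψ ↑w) := by
  constructor
  · intro w; exact h.1 _
  · intro a b hab
    rw [identify, SimpleGraph.fromRel_adj] at hab
    obtain ⟨hne, hr⟩ := hab
    have key : ∀ x y : V, (G.Adj x y ∨ (x = w₀ ∧ G.Adj u₀ y)) → cdot (ψ x) (ψ y) = 0 := by
      rintro x y (h1 | ⟨rfl, h2⟩)
      · exact h.2 _ _ h1
      · rw [hc, cdot_smul_left, h.2 _ _ h2, mul_zero]
    have key2 : ∀ x y : V, (G.Adj x y ∨ (x = w₀ ∧ G.Adj u₀ y) ∨ (y = w₀ ∧ G.Adj u₀ x)) →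
        cdot (ψ x) (ψ y) = 0 := by
      rintro x y (h1 | h2 | h3)
      · exact key x y (Or.inl h1)
      · exact key x y (Or.inr h2)
      · rw [cdot_conj, key y x (Or.inr h3), map_zero]
    rcases hr with hr | hr
    · exact key2 _ _ hr
    · rw [cdot_conj, key2 _ _ hr, map_zero]

/-- the K_{k-1,2}-based branching rule for `k`-dimensional orthogonal
representations. Here `v 0, …, v ⟨k-2⟩` play the role of `v₁, …, v_{k-1}` and
`v ⟨k-1⟩, v ⟨k⟩` play the role of `v_k, v_{k+1}`. -/
theorem orth_rep_iff_branching {V : Type} [Fintype V] [DecidableEq V]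
    (G : SimpleGraph V) (k : ℕ) (hk : 3 ≤ k)
    (v : Fin (k + 1) → V) (hinj : Function.Injective v)
    (hadj : ∀ i j : Fin (k + 1), (i : ℕ) < k - 1 → k - 1 ≤ (j : ℕ) →
      G.Adj (v i) (v j)) :
    (∃ ψ : V → Fin k → ℂ, IsOrthRep G k ψ) ↔
      ((¬ G.Adj (v ⟨k - 1, by omega⟩) (v ⟨k, by omega⟩) ∧
        ∃ ψ : {w : V // w ≠ v ⟨k, by omega⟩} → Fin k → ℂ, IsOrthRep (identify G (v ⟨k, by omega⟩) (v ⟨k - 1, by omega⟩)) k ψ) ∨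
      (∃ i i' : Fin (k + 1), (i : ℕ) < k - 1 ∧ (i' : ℕ) < k - 1 ∧ i ≠ i' ∧
        ¬ G.Adj (v i) (v i') ∧
        ∃ ψ, IsOrthRep (identify G (v i) (v i')) k ψ) ∨
      (∃ S : Finset (Fin (k + 1)), (∀ i ∈ S, (i : ℕ) < k - 1) ∧ 3 ≤ S.card ∧
        (¬ ∃ i ∈ S, ∀ j ∈ S, j ≠ i → G.Adj (v i) (v j)) ∧
        ∃ ψ, IsOrthRep (setIdentify G ((S.image v : Finset V) : Set V)) k ψ)) := by
  classical
  constructor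
  · rintro ⟨ψ, hψ⟩
    have hne0 : ∀ w, ψ w ≠ 0 := by
      intro w hw
      have h1 := hψ.1 w
      rw [hw] at h1
      simp [cdot] at h1
    by_cases hli : LinearIndependent ℂ
        ![toE (ψ (v ⟨k - 1, by omega⟩)), toE (ψ (v ⟨k, by omega⟩))]
    · -- vectors at v_k, v_{k+1} independent: the first k-1 vectors are dependent
      right
      obtain ⟨T, hT2, hTspan⟩ := exists_circuit (M := EuclideanSpace ℂ (Fin k))
        (fun i : {i : Fin (k+1) // (i : ℕ) < k - 1} =>
          toE (ψ (v i.1)))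
        (by
          intro hLI
          have hmem : ∀ i : {i : Fin (k+1) // (i : ℕ) < k - 1},
              toE (ψ (v i.1)) ∈
              (Submodule.span ℂ (Set.range
                ![toE (ψ (v ⟨k - 1, by omega⟩)),
                  toE (ψ (v ⟨k, by omega⟩))]))ᗮ := by
            intro i
            rw [Submodule.mem_orthogonal]
            refine inner_span_left' _ _ ?_
            rintro y ⟨j, rfl⟩
            fin_cases j
            · show inner ℂ (toE (ψ (v ⟨k - 1, by omega⟩))) (toE (ψ (v i.1))) = 0
              rw [← cdot_eq_inner]
              exact hψ.2 _ _ (hadj _ _ i.2 le_rfl).symm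
            · show inner ℂ (toE (ψ (v ⟨k, by omega⟩))) (toE (ψ (v i.1))) = 0
              rw [← cdot_eq_inner]
              exact hψ.2 _ _ (hadj _ _ i.2 (by simp)).symm
          have hcard : Fintype.card {i : Fin (k+1) // (i : ℕ) < k - 1} = k - 1 := by
            rw [← Fintype.card_congr
              (⟨fun (j : Fin (k-1)) => (⟨⟨(j : ℕ), by omega⟩, j.isLt⟩ :
                  {i : Fin (k+1) // (i : ℕ) < k - 1}),
                fun i => ⟨(i.1 : ℕ), i.2⟩,
                fun j => by ext; rfl,
                fun i => by ext; rfl⟩ :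
                Fin (k-1) ≃ {i : Fin (k+1) // (i : ℕ) < k - 1}),
              Fintype.card_fin]
          have h1 : Module.finrank ℂ (Submodule.span ℂ (Set.range
              (fun i : {i : Fin (k+1) // (i : ℕ) < k - 1} =>
                toE (ψ (v i.1))))) = k - 1 := by
            rw [finrank_span_eq_card hLI, hcard]
          have h2 : Module.finrank ℂ (Submodule.span ℂ (Set.range
              (fun i : {i : Fin (k+1) // (i : ℕ) < k - 1} =>
                toE (ψ (v i.1))))) ≤ Module.finrank ℂ
              ((Submodule.span ℂ (Set.range
                ![toE (ψ (v ⟨k - 1, by omega⟩)),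
                  toE (ψ (v ⟨k, by omega⟩))]))ᗮ) := by
            apply Submodule.finrank_mono
            rw [Submodule.span_le]
            rintro _ ⟨i, rfl⟩
            exact hmem i
          simp only [h1] at h2
          have h3 := Submodule.finrank_add_finrank_orthogonal
            (Submodule.span ℂ (Set.range
              ![toE (ψ (v ⟨k - 1, by omega⟩)),
                toE (ψ (v ⟨k, by omega⟩))]))
          simp only [finrank_span_eq_card hli, Fintype.card_fin, finrank_euclideanSpace_fin] at h3
          omega)
        (fun i h => hne0 (v i.1) (by simpa [toE] using h))
      rcases eq_or_lt_of_le hT2 with h2 | h3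
      · -- |T| = 2 : two parallel vectors among the first k-1
        left
        obtain ⟨i, i', hii', hT⟩ := Finset.card_eq_two.mp h2.symm
        have hspan := hTspan i' (by rw [hT]; simp)
        have herase : T.erase i' = {i} := by
          ext j
          simp only [hT, Finset.mem_erase, Finset.mem_insert, Finset.mem_singleton]
          constructor
          · rintro ⟨hj, hj' | hj'⟩
            · exact hj'
            · exact absurd hj' hj
          · rintro rfl
            exact ⟨hii', Or.inl rfl⟩
        rw [herase] at hspan
        have hsing : toE (ψ (v ↑i')) ∈
            Submodule.span ℂ {toE (ψ (v ↑i))} := by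
          simpa using hspan
        obtain ⟨c, hc⟩ := Submodule.mem_span_singleton.mp hsing
        have hc' : ψ (v ↑i') = c • ψ (v ↑i) := by simpa [toE] using (congrArg WithLp.ofLp hc).symm
        have hcn : c ≠ 0 := by
          rintro rfl
          rw [zero_smul] at hc'
          exact hne0 _ hc'
        refine ⟨↑i, ↑i', i.2, i'.2, fun hcc => hii' (Subtype.ext hcc), ?_, ?_⟩
        · intro hadj'
          have h0 := hψ.2 _ _ hadj'
          rw [hc', cdot_smul_right, hψ.1, mul_one] at h0
          exact hcn h0
        · exact ⟨_, isOrthRep_identify_of_scaled G k (v ↑i) (v ↑i') ψ hψ c hc'⟩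
      · -- |T| ≥ 3 : set identification
        right
        refine ⟨T.image Subtype.val, ?_, ?_, ?_, ?_⟩
        · intro j hj
          obtain ⟨i, hiT, rfl⟩ := Finset.mem_image.mp hj
          exact i.2
        · rw [Finset.card_image_of_injective _ Subtype.val_injective]; omega
        · rintro ⟨j, hjS, hdom⟩
          obtain ⟨i₀, hi₀T, rfl⟩ := Finset.mem_image.mp hjS
          have h0 : inner ℂ (toE (ψ (v ↑i₀))) (toE (ψ (v ↑i₀))) = 0 := by
            refine inner_span_right' _ _ ?_ _ (hTspan i₀ hi₀T)
            rintro y ⟨i', hi'', rfl⟩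
            have hi'e : i' ∈ T.erase i₀ := Finset.mem_coe.mp hi''
            have hne' : (↑i' : Fin (k+1)) ≠ ↑i₀ :=
              fun hcc => (Finset.mem_erase.mp hi'e).1 (Subtype.ext hcc)
            rw [← cdot_eq_inner]
            exact hψ.2 _ _ (hdom ↑i'
              (Finset.mem_image_of_mem _ (Finset.mem_of_mem_erase hi'e)) hne')
          have h1 := hψ.1 (v ↑i₀)
          rw [cdot_eq_inner, h0] at h1
          exact zero_ne_one h1
        · refine ⟨ψ, hψ.1, ?_⟩
          intro x y hxy
          rw [setIdentify, SimpleGraph.fromRel_adj] at hxy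
          obtain ⟨hnexy, hr⟩ := hxy
          have key : ∀ x y : V,
              (G.Adj x y ∨ (x ∈ (((T.image Subtype.val).image v : Finset V) : Set V) ∧
                y ∉ (((T.image Subtype.val).image v : Finset V) : Set V) ∧
                ∀ w ∈ (((T.image Subtype.val).image v : Finset V) : Set V),
                  w ≠ x → G.Adj y w)) → cdot (ψ x) (ψ y) = 0 := by
            rintro x y (h1 | ⟨hxS, _, hall⟩)
            · exact hψ.2 _ _ h1
            · obtain ⟨j, hjS, rfl⟩ := Finset.mem_image.mp (by exact_mod_cast hxS)
              obtain ⟨i₀, hi₀T, rfl⟩ := Finset.mem_image.mp hjS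
              have h0 : cdot (ψ y) (ψ (v ↑i₀)) = 0 := by
                rw [cdot_eq_inner]
                refine inner_span_right' _ _ ?_ _ (hTspan i₀ hi₀T)
                rintro z ⟨i', hi'', rfl⟩
                have hi'e : i' ∈ T.erase i₀ := Finset.mem_coe.mp hi''
                have hvmem : v ↑i' ∈
                    (((T.image Subtype.val).image v : Finset V) : Set V) := by
                  exact_mod_cast Finset.mem_image_of_mem v
                    (Finset.mem_image_of_mem _ (Finset.mem_of_mem_erase hi'e))
                have hvne : v ↑i' ≠ v ↑i₀ :=
                  fun hcc => (Finset.mem_erase.mp hi'e).1 (Subtype.ext (hinj hcc))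
                rw [← cdot_eq_inner]
                exact hψ.2 _ _ (hall (v ↑i') hvmem hvne)
              rw [cdot_conj, h0, map_zero]
          rcases hr with hr | hr
          · exact key _ _ hr
          · rw [cdot_conj, key _ _ hr, map_zero]
    · -- vectors at v_k, v_{k+1} parallel
      left
      rw [linearIndependent_fin2] at hli
      push_neg at hli
      simp only [Matrix.cons_val_one, Matrix.head_cons, Matrix.cons_val_zero] at hli
      obtain ⟨c, hc⟩ := hli (by simpa [toE] using hne0 (v ⟨k, by omega⟩))
      have hc' : ψ (v ⟨k - 1, by omega⟩) = c • ψ (v ⟨k, by omega⟩) := by simpa [toE] using (congrArg WithLp.ofLp hc).symm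
      have hcn : c ≠ 0 := by
        rintro rfl
        rw [zero_smul] at hc'
        exact hne0 _ hc'
      refine ⟨?_, _, isOrthRep_identify_of_scaled G k (v ⟨k, by omega⟩)
        (v ⟨k - 1, by omega⟩) ψ hψ c hc'⟩
      intro hadjAB
      have h0 := hψ.2 _ _ hadjAB
      rw [hc', cdot_smul_left, hψ.1, mul_one] at h0
      exact hcn (by simpa using congrArg (starRingEnd ℂ) h0)
  · rintro (⟨hnadj, ψ, hψ⟩ | ⟨i, i', hi, hi', hne, hnadj, ψ, hψ⟩ | ⟨S, _, _, _, ψ, hψ⟩)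
    · refine isOrthRep_of_identify G k (v ⟨k, by omega⟩) (v ⟨k - 1, by omega⟩) ?_
        (fun hadj' => hnadj hadj'.symm) ψ hψ
      intro hcc
      have := hinj hcc
      rw [Fin.mk.injEq] at this
      omega
    · exact isOrthRep_of_identify G k (v i) (v i')
        (fun hcc => hne (hinj hcc).symm) hnadj ψ hψ
    · refine ⟨ψ, hψ.1, fun x y hxy => hψ.2 x y ?_⟩
      rw [setIdentify, SimpleGraph.fromRel_adj]
      exact ⟨hxy.ne, Or.inl (Or.inl hxy)⟩
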